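/- Let X be a nonnegative random variable with CDF F that is continuous and strictly increasing on [0,∞), with F(0) = 0 and finite positive mean μ_F. Then the following are equivalent: (i) X is NBUE, i.e., for every t ≥ 0 with P(X > t) > 0, E[X − t | X > t] ≤ μ_F; (ii) T_F(p) ≥ p·μ_F for every p ∈ [0,1], i.e., the scaled TTT transform S_F = T_F/μ_F dominates the identity function on [0,1]. -/

import Mathlib

open MeasureTheory

lemma aux_sInf_image {S : Set ℝ} {t : ℝ} (htS : t ∈ S) (hlb : ∀ u ∈ S, t ≤ u) :
    sInf ((fun u : ℝ => (u : EReal)) '' S) = (t : EReal) := by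
  apply le_antisymm
  · exact sInf_le ⟨t, htS, rfl⟩
  · refine le_sInf ?_
    rintro y ⟨u, huS, rfl⟩
    show (t : EReal) ≤ (u : EReal)
    exact_mod_cast hlb u huS

lemma aux_set_eq {S : Set ℝ} {t : ℝ} (htS : t ∈ S) (hlb : ∀ u ∈ S, t ≤ u) :
    {x : ℝ | 0 < x ∧ (x : EReal) < sInf ((fun u : ℝ => (u : EReal)) '' S)}
      = Set.Ioo 0 t := by
  rw [aux_sInf_image htS hlb]
  ext x
  simp [Set.mem_Ioo, EReal.coe_lt_coe_iff]

/-- Let `X` be a nonnegative random variable with CDF `F` continuous and strictly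
increasing on `[0,∞)`, `F(0) = 0`, and finite positive mean `μ`. The following are
equivalent:
(i) `X` is NBUE: for every `t ≥ 0` with `P(X > t) > 0`, the mean residual life
`E[X − t | X > t] = (∫_t^∞ (1 − F(x)) dx)/(1 − F(t))` is at most `μ`;
(ii) `T_F(p) ≥ p·μ` for every `p ∈ [0,1]`, i.e. the scaled TTT transform `T_F/μ`
dominates the identity on `[0,1]`. Here `T_F(p) = ∫_0^{F^{-1}(p)} (1 − F(x)) dx`
with `F^{-1}(p) = inf {u : F(u) ≥ p}` taken in the extended reals. -/
theorem nbue_iff_scaled_ttt_dominates_id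
    {Ω : Type*} [MeasureSpace Ω] [IsProbabilityMeasure (volume : Measure Ω)]
    (X : Ω → ℝ) (hmeas : Measurable X) (hnonneg : ∀ ω, 0 ≤ X ω)
    (hint : Integrable X)
    (F : ℝ → ℝ) (hF : ∀ x, F x = (volume {ω | X ω ≤ x}).toReal)
    (hcont : Continuous F) (hsmono : StrictMonoOn F (Set.Ici (0:ℝ)))
    (h0 : F 0 = 0)
    (μ : ℝ) (hμ : μ = ∫ ω, X ω) (hμpos : 0 < μ) :
    (∀ t : ℝ, 0 ≤ t → volume {ω | t < X ω} ≠ 0 →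
        (∫ x in Set.Ioi t, (1 - F x)) / (1 - F t) ≤ μ)
    ↔ (∀ p ∈ Set.Icc (0:ℝ) 1,
        p * μ ≤ ∫ x in {x : ℝ | 0 < x ∧
            (x : EReal) < sInf ((fun u : ℝ => (u : EReal)) '' {u : ℝ | p ≤ F u})},
          (1 - F x)) := by
  have hXle : ∀ t : ℝ, MeasurableSet {ω | X ω ≤ t} := fun t => hmeas measurableSet_Iic
  have hfin : ∀ t : ℝ, volume {ω | X ω ≤ t} ≠ ⊤ := fun t => measure_ne_top _ _
  have hfin' : ∀ t : ℝ, volume {ω | t < X ω} ≠ ⊤ := fun t => measure_ne_top _ _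
  -- tail probability equals 1 - F
  have hGF : ∀ t : ℝ, (volume {ω | t < X ω}).toReal = 1 - F t := by
    intro t
    have hcompl : {ω | t < X ω} = {ω | X ω ≤ t}ᶜ := by
      ext ω; simp [not_le]
    rw [hcompl, measure_compl (hXle t) (hfin t), measure_univ,
      ENNReal.toReal_sub_of_le (prob_le_one) ENNReal.one_ne_top, ENNReal.toReal_one, hF t]
  -- F monotone, between 0 and 1
  have hmono : Monotone F := by
    intro a b hab
    rw [hF a, hF b]
    exact ENNReal.toReal_mono (hfin b) (measure_mono fun ω h => le_trans h hab)
  have hF0 : ∀ x : ℝ, 0 ≤ F x := fun x => by rw [hF x]; exact ENNReal.toReal_nonneg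
  have hF1 : ∀ x : ℝ, F x ≤ 1 := by
    intro x
    rw [hF x]
    have := prob_le_one (μ := (volume : Measure Ω)) (s := {ω | X ω ≤ x})
    calc (volume {ω | X ω ≤ x}).toReal ≤ (1 : ENNReal).toReal :=
          ENNReal.toReal_mono ENNReal.one_ne_top this
      _ = 1 := ENNReal.toReal_one
  have hFneg : ∀ x : ℝ, x ≤ 0 → F x = 0 :=
    fun x hx => le_antisymm (h0 ▸ hmono hx) (hF0 x)
  have hg0 : ∀ x : ℝ, 0 ≤ 1 - F x := fun x => by linarith [hF1 x]
  -- layer cake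
  have hXnn : 0 ≤ᵐ[volume] X := Filter.Eventually.of_forall hnonneg
  have hlayer : μ = ∫ t in Set.Ioi (0:ℝ), (1 - F t) := by
    rw [hμ, hint.integral_eq_integral_meas_lt hXnn]
    exact setIntegral_congr_fun measurableSet_Ioi fun t _ => hGF t
  -- integrability of 1 - F on Ioi 0
  have hgint : IntegrableOn (fun x => 1 - F x) (Set.Ioi (0:ℝ)) := by
    refine ⟨((continuous_const.sub hcont).aestronglyMeasurable).restrict, ?_⟩
    rw [hasFiniteIntegral_iff_ofReal
        (Filter.Eventually.of_forall fun x => hg0 x)]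
    have hkey : ∫⁻ t in Set.Ioi (0:ℝ), ENNReal.ofReal (1 - F t)
        = ∫⁻ t in Set.Ioi (0:ℝ), volume {ω | t < X ω} := by
      refine setLIntegral_congr_fun measurableSet_Ioi ?_
      intro t _
      show ENNReal.ofReal (1 - F t) = volume {ω | t < X ω}
      rw [← hGF t, ENNReal.ofReal_toReal (hfin' t)]
    rw [hkey, ← lintegral_eq_lintegral_meas_lt volume hXnn hmeas.aemeasurable]
    exact hint.lintegral_lt_top
  -- splitting the integral at t > 0
  have hsplit : ∀ t : ℝ, 0 < t →
      (∫ x in Set.Ioi (0:ℝ), (1 - F x))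
        = (∫ x in Set.Ioo (0:ℝ) t, (1 - F x)) + ∫ x in Set.Ioi t, (1 - F x) := by
    intro t ht
    rw [← Set.Ioc_union_Ioi_eq_Ioi (le_of_lt ht),
      setIntegral_union (Set.Ioc_disjoint_Ioi le_rfl) measurableSet_Ioi
        (hgint.mono_set (by rw [← Set.Ioc_union_Ioi_eq_Ioi (le_of_lt ht)]; exact Set.subset_union_left))
        (hgint.mono_set (by rw [← Set.Ioc_union_Ioi_eq_Ioi (le_of_lt ht)]; exact Set.subset_union_right)),
      integral_Ioc_eq_integral_Ioo]
  constructor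
  · -- NBUE → TTT dominance
    intro hnbue p hp
    obtain ⟨hp0, hp1⟩ := hp
    rcases eq_or_lt_of_le hp0 with hp0' | hp0'
    · -- p = 0: integral is nonnegative
      rw [← hp0', zero_mul]
      refine setIntegral_nonneg ?_ fun x _ => hg0 x
      have : {x : ℝ | 0 < x ∧ (x : EReal) < sInf ((fun u : ℝ => (u : EReal)) '' {u : ℝ | (0:ℝ) ≤ F u})}
          = Set.Ioi 0 ∩ (fun x : ℝ => (x : EReal)) ⁻¹'
              (Set.Iio (sInf ((fun u : ℝ => (u : EReal)) '' {u : ℝ | (0:ℝ) ≤ F u}))) := by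
        ext x; simp [Set.mem_Ioi]
      rw [this]
      exact measurableSet_Ioi.inter (continuous_coe_real_ereal.measurable measurableSet_Iio)
    · -- p > 0
      set S : Set ℝ := {u : ℝ | p ≤ F u} with hS
      by_cases hne : S.Nonempty
      · have hSsub : S ⊆ Set.Ioi 0 := by
          intro u hu
          by_contra h
          rw [Set.mem_Ioi, not_lt] at h
          have := hFneg u (by simpa [Set.mem_Ioi] using h)
          have : p ≤ 0 := by rw [← this]; exact hu
          linarith
        have hbdd : BddBelow S := ⟨0, fun u hu => le_of_lt (hSsub hu)⟩
        have hclosed : IsClosed S := isClosed_Ici.preimage hcont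
        set t := sInf S with htdef
        have htS : t ∈ S := hclosed.csInf_mem hne hbdd
        have htpos : 0 < t := hSsub htS
        have hlb : ∀ u ∈ S, t ≤ u := fun u hu => csInf_le hbdd hu
        rw [aux_set_eq htS hlb]
        have htail : ∫ x in Set.Ioi t, (1 - F x) ≤ (1 - p) * μ := by
          rcases lt_or_ge (F t) 1 with hFt | hFt
          · have hvol : volume {ω | t < X ω} ≠ 0 := by
              intro hzero
              have : (volume {ω | t < X ω}).toReal = 0 := by rw [hzero]; simp
              rw [hGF t] at this
              linarith
            have := hnbue t (le_of_lt htpos) hvol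
            have hpos : 0 < 1 - F t := by linarith
            rw [div_le_iff₀ hpos] at this
            calc ∫ x in Set.Ioi t, (1 - F x) ≤ μ * (1 - F t) := this
              _ ≤ (1 - p) * μ := by
                have hpFt : p ≤ F t := htS
                nlinarith [hμpos.le]
          · have hFt1 : F t = 1 := le_antisymm (hF1 t) hFt
            have hzero : ∫ x in Set.Ioi t, (1 - F x) = 0 := by
              rw [← integral_zero ℝ ℝ (μ := volume.restrict (Set.Ioi t))]
              refine setIntegral_congr_fun measurableSet_Ioi ?_
              intro x hx
              have : F t ≤ F x := hmono (le_of_lt hx)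
              have : F x = 1 := le_antisymm (hF1 x) (hFt1 ▸ this)
              simp [this]
            rw [hzero]
            nlinarith [hμpos.le]
        have := hsplit t htpos
        rw [← hlayer] at this
        nlinarith [hμpos.le]
      · -- S empty: set is Ioi 0, integral equals μ
        have hSempty : S = ∅ := Set.not_nonempty_iff_eq_empty.mp hne
        have hInf : sInf ((fun u : ℝ => (u : EReal)) '' S) = ⊤ := by
          rw [hSempty]; simp
        have hsetEq : {x : ℝ | 0 < x ∧ (x : EReal) < sInf ((fun u : ℝ => (u : EReal)) '' S)}
            = Set.Ioi 0 := by
          rw [hInf]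
          ext x
          simp [Set.mem_Ioi, EReal.coe_lt_top]
        rw [hsetEq, ← hlayer]
        nlinarith
  · -- TTT dominance → NBUE
    intro httt t ht hvol
    have hFt1 : F t < 1 := by
      have hne : (volume {ω | t < X ω}).toReal ≠ 0 :=
        ENNReal.toReal_ne_zero.mpr ⟨hvol, hfin' t⟩
      have hnn : 0 ≤ (volume {ω | t < X ω}).toReal := ENNReal.toReal_nonneg
      rw [hGF t] at hne hnn
      rcases lt_or_eq_of_le hnn with h | h
      · linarith
      · exact absurd h.symm hne
    rcases eq_or_lt_of_le ht with ht0 | htpos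
    · -- t = 0
      rw [← ht0, h0, sub_zero, div_one, ← ht0] at *
      rw [← hlayer]
    · -- t > 0
      set p := F t with hpdef
      have hppos : 0 < p := h0 ▸ hsmono (le_refl (0:ℝ)) (le_of_lt htpos) htpos
      have htS : t ∈ {u : ℝ | p ≤ F u} := le_refl p
      have hlb : ∀ u ∈ {u : ℝ | p ≤ F u}, t ≤ u := by
        intro u hu
        by_contra h
        push_neg at h
        rcases lt_or_ge u 0 with hu0 | hu0
        · have : F u = 0 := hFneg u (le_of_lt hu0)
          have : p ≤ 0 := by rw [← this]; exact hu
          linarith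
        · have : F u < F t := hsmono hu0 (le_of_lt htpos) h
          have : ¬ p ≤ F u := by rw [hpdef]; linarith
          exact this hu
      have hkey := httt p ⟨le_of_lt hppos, hF1 t⟩
      rw [aux_set_eq htS hlb] at hkey
      have hsp := hsplit t htpos
      rw [← hlayer] at hsp
      have hpos : 0 < 1 - F t := by linarith
      rw [div_le_iff₀ hpos]
      nlinarith
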